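/- For every α>0, there exists an instance consisting of a path graph and two agents with binary additive utilities such that no connected leximin allocation is α-PMMS. -/

import Mathlib

namespace GraphFair

variable {V : Type*}

/-- A bundle is connected if it is empty or induces a connected subgraph of `G`. -/
def BundleConn (G : SimpleGraph V) (B : Finset V) : Prop :=
  B = ∅ ∨ (G.induce (B : Set V)).Connected

/-- A connected allocation of all the items among `n` agents: the bundles cover `V`,
are pairwise disjoint, and each bundle is connected in `G`. -/
def IsConnAlloc (G : SimpleGraph V) {n : ℕ} (A : Fin n → Finset V) : Prop :=
  (∀ v : V, ∃ i, v ∈ A i) ∧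
  (∀ i j : Fin n, i ≠ j → Disjoint (A i) (A j)) ∧
  (∀ i, BundleConn G (A i))

variable [DecidableEq V]

/-- Partitions of `X` into two bundles, each connected in the induced subgraph `G[X]`
(for `Y ⊆ X`, connectivity of `Y` in `G[X]` is the same as connectivity of `Y` in `G`). -/
def Part2 (G : SimpleGraph V) (X : Finset V) : Set (Finset V × Finset V) :=
  {p | p.1 ∪ p.2 = X ∧ Disjoint p.1 p.2 ∧ BundleConn G p.1 ∧ BundleConn G p.2}

/-- The pairwise maximin share of a bundle `X` with respect to utility `u`:
the maximum over partitions of `X` into two connected bundles of the minimum utility. -/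
noncomputable def pmms (G : SimpleGraph V) (u : Finset V → ℝ) (X : Finset V) : ℝ :=
  sSup ((fun p : Finset V × Finset V => min (u p.1) (u p.2)) '' Part2 G X)

/-- The `n`-agent maximin share of the whole vertex set: maximum over partitions of `V`
into `n` connected bundles of the minimum utility of a bundle. -/
noncomputable def mms (G : SimpleGraph V) (u : Finset V → ℝ) (n : ℕ) : ℝ :=
  sSup ((fun A : Fin n → Finset V => ⨅ i, u (A i)) '' {A | IsConnAlloc G A})

/-- Agents `i` and `j` are adjacent under allocation `A`. -/
def AdjUnder (G : SimpleGraph V) {n : ℕ} (A : Fin n → Finset V) (i j : Fin n) : Prop :=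
  ∃ v ∈ A i, ∃ w ∈ A j, G.Adj v w

/-- An allocation is `α`-PMMS if every agent with an empty bundle, and every agent with
respect to each of her neighbours, receives at least `α` times her pairwise maximin share. -/
def IsAlphaPMMS (G : SimpleGraph V) {n : ℕ} (u : Fin n → Finset V → ℝ)
    (A : Fin n → Finset V) (α : ℝ) : Prop :=
  ∀ i j : Fin n, i ≠ j → (A i = ∅ ∨ AdjUnder G A i j) →
    α * pmms G (u i) (A i ∪ A j) ≤ u i (A i)

/-- An allocation is `α`-MMS if every agent receives at least `α` times her maximin share. -/
def IsAlphaMMS (G : SimpleGraph V) {n : ℕ} (u : Fin n → Finset V → ℝ)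
    (A : Fin n → Finset V) (α : ℝ) : Prop :=
  ∀ i : Fin n, α * mms G (u i) n ≤ u i (A i)

/-- An additive (nonnegative) utility function. -/
def AdditiveUtil (u : Finset V → ℝ) : Prop :=
  (∀ X : Finset V, u X = ∑ v ∈ X, u {v}) ∧ ∀ v : V, 0 ≤ u {v}

/-- A binary additive utility function. -/
def BinaryAdditiveUtil (u : Finset V → ℝ) : Prop :=
  (∀ X : Finset V, u X = ∑ v ∈ X, u {v}) ∧ ∀ v : V, u {v} = 0 ∨ u {v} = 1

/-- A monotone (nonnegative) utility function. -/
def MonotoneUtil (u : Finset V → ℝ) : Prop :=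
  (∀ X Y : Finset V, X ⊆ Y → u X ≤ u Y) ∧ 0 ≤ u ∅

/-- An allocation is `α`-EF1. -/
def IsAlphaEF1 {n : ℕ} (u : Fin n → Finset V → ℝ) (A : Fin n → Finset V) (α : ℝ) : Prop :=
  ∀ i j : Fin n, i ≠ j → A j ≠ ∅ → ∃ v ∈ A j, α * u i ((A j).erase v) ≤ u i (A i)

/-- An allocation is EFX (envy-free up to any item). -/
def IsEFX {n : ℕ} (u : Fin n → Finset V → ℝ) (A : Fin n → Finset V) : Prop :=
  ∀ i j : Fin n, i ≠ j → A j ≠ ∅ → ∀ v ∈ A j, u i ((A j).erase v) ≤ u i (A i)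

/-- The number of agents receiving positive utility. -/
noncomputable def nashCount {n : ℕ} (u : Fin n → Finset V → ℝ) (A : Fin n → Finset V) : ℕ :=
  (Finset.univ.filter fun i : Fin n => 0 < u i (A i)).card

/-- The product of the positive utilities. -/
noncomputable def nashProd {n : ℕ} (u : Fin n → Finset V → ℝ) (A : Fin n → Finset V) : ℝ :=
  ∏ i ∈ Finset.univ.filter (fun i : Fin n => 0 < u i (A i)), u i (A i)

/-- A maximum Nash welfare (MNW) connected allocation: maximizes the number of agents with
positive utility and, subject to that, the product of the positive utilities. -/
def IsMNW (G : SimpleGraph V) {n : ℕ} (u : Fin n → Finset V → ℝ)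
    (A : Fin n → Finset V) : Prop :=
  IsConnAlloc G A ∧
  (∀ B : Fin n → Finset V, IsConnAlloc G B → nashCount u B ≤ nashCount u A) ∧
  (∀ B : Fin n → Finset V, IsConnAlloc G B →
    nashCount u B = nashCount u A → nashProd u B ≤ nashProd u A)

/-- `A'` is a Pareto-improvement of `A`. -/
def ParetoImproves {n : ℕ} (u : Fin n → Finset V → ℝ) (A' A : Fin n → Finset V) : Prop :=
  (∀ i, u i (A i) ≤ u i (A' i)) ∧ ∃ j, u j (A j) < u j (A' j)

/-- A connected allocation is Pareto-optimal if no connected allocation Pareto-improves it. -/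
def IsParetoOptimal (G : SimpleGraph V) {n : ℕ} (u : Fin n → Finset V → ℝ)
    (A : Fin n → Finset V) : Prop :=
  ∀ B : Fin n → Finset V, IsConnAlloc G B → ¬ ParetoImproves u B A

/-- The vector of agents' utilities rearranged in increasing order. -/
noncomputable def sortedUtils {n : ℕ} (u : Fin n → Finset V → ℝ)
    (A : Fin n → Finset V) : List ℝ :=
  (((Finset.univ : Finset (Fin n)).val.map fun i => u i (A i)).sort (· ≤ ·))

/-- `A'` is a leximin improvement of `A`: the sorted utility vector of `A'` is
lexicographically greater than that of `A`. -/
def LeximinImproves {n : ℕ} (u : Fin n → Finset V → ℝ) (A' A : Fin n → Finset V) : Prop :=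
  List.Lex (· < ·) (sortedUtils u A) (sortedUtils u A')

/-- A connected leximin allocation. -/
def IsLeximin (G : SimpleGraph V) {n : ℕ} (u : Fin n → Finset V → ℝ)
    (A : Fin n → Finset V) : Prop :=
  IsConnAlloc G A ∧ ∀ B : Fin n → Finset V, IsConnAlloc G B → ¬ LeximinImproves u B A

/-- `G` is a star: there is a central vertex adjacent to exactly all other vertices. -/
def IsStar (G : SimpleGraph V) : Prop :=
  ∃ c : V, ∀ a b : V, G.Adj a b ↔ a ≠ b ∧ (a = c ∨ b = c)

/-- A submodular utility function. -/
def SubmodularUtil (u : Finset V → ℝ) : Prop :=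
  ∀ X Y : Finset V, u (X ∪ Y) + u (X ∩ Y) ≤ u X + u Y

/-- A utility function with binary marginal gains (and `u ∅ = 0`). -/
def BinaryMarginalGains (u : Finset V → ℝ) : Prop :=
  u ∅ = 0 ∧ ∀ (X : Finset V) (v : V),
    u (insert v X) - u X = 0 ∨ u (insert v X) - u X = 1

/-- On the path with `m` vertices (edges numbered `1, …, m-1` from left to right),
`itv m x y` is the bundle `[x, y]` of all vertices between positions `x` and `y`. -/
def itv (m x y : ℕ) : Finset (Fin m) :=
  Finset.univ.filter fun v : Fin m => x ≤ v.val ∧ v.val < y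

end GraphFair

namespace PF
open GraphFair SimpleGraph


/-- Intermediate value along a walk in an induced subgraph of a path graph. -/
lemma walk_ivt {m : ℕ} {s : Set (Fin m)} {a b : ↥s}
    (w : ((pathGraph m).induce s).Walk a b) :
    ∀ j : ℕ, (a : Fin m).val ≤ j → j ≤ (b : Fin m).val → ∃ c : Fin m, c ∈ s ∧ c.val = j := by
  induction w with
  | @nil u =>
      intro j h1 h2
      exact ⟨u.1, u.2, by omega⟩
  | @cons a x b h p ih =>
      intro j h1 h2
      by_cases hx : (x : Fin m).val ≤ j
      · exact ih j hx h2
      · push_neg at hx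
        have hadj : (pathGraph m).Adj a.1 x.1 := h
        rw [pathGraph_adj] at hadj
        rcases hadj with h' | h'
        · exact ⟨a.1, a.2, by omega⟩
        · omega

/-- If a connected (in the induced sense) finite bundle contains `p` and `q`, it contains
every vertex between them. -/
lemma interval_mem {m : ℕ} {A : Finset (Fin m)}
    (hc : ((pathGraph m).induce (A : Set (Fin m))).Connected)
    {p q : Fin m} (hp : p ∈ A) (hq : q ∈ A) {j : ℕ} (hj : j < m)
    (h1 : p.val ≤ j) (h2 : j ≤ q.val) : (⟨j, hj⟩ : Fin m) ∈ A := by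
  have hr := hc.preconnected ⟨p, hp⟩ ⟨q, hq⟩
  obtain ⟨w⟩ := hr
  obtain ⟨c, hcA, hcj⟩ := walk_ivt w j h1 h2
  have : c = ⟨j, hj⟩ := Fin.ext hcj
  rwa [this] at hcA

lemma mem_itv {m x y : ℕ} {v : Fin m} : v ∈ itv m x y ↔ x ≤ v.val ∧ v.val < y := by
  simp [itv]

lemma itv_reach {m x y : ℕ} :
    ∀ (d : ℕ) (u v : Fin m) (hu : u ∈ itv m x y) (hv : v ∈ itv m x y),
      u.val + d = v.val →
      ((pathGraph m).induce ((itv m x y : Finset (Fin m)) : Set (Fin m))).Reachable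
        ⟨u, hu⟩ ⟨v, hv⟩ := by
  intro d
  induction d with
  | zero =>
      intro u v hu hv h
      have : u = v := Fin.ext (by omega)
      subst this
      rfl
  | succ d ih =>
      intro u v hu hv h
      have hum : u.val + 1 < m := by have := v.isLt; omega
      set u' : Fin m := ⟨u.val + 1, by omega⟩ with hu'
      have hu'mem : u' ∈ itv m x y := by
        rw [mem_itv] at hu hv ⊢
        simp [hu']
        omega
      have hadj : ((pathGraph m).induce ((itv m x y : Finset (Fin m)) : Set (Fin m))).Adj
          ⟨u, hu⟩ ⟨u', hu'mem⟩ := by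
        show (pathGraph m).Adj u u'
        rw [pathGraph_adj]
        left; rfl
      exact hadj.reachable.trans (ih u' v hu'mem hv (by simp [hu']; omega))

lemma itv_conn {m x y : ℕ} (hxy : x < y) (hy : y ≤ m) :
    ((pathGraph m).induce ((itv m x y : Finset (Fin m)) : Set (Fin m))).Connected := by
  rw [connected_iff]
  constructor
  · intro a b
    rcases a with ⟨u, hu⟩
    rcases b with ⟨v, hv⟩
    have hu' : u ∈ itv m x y := hu
    have hv' : v ∈ itv m x y := hv
    rcases le_total u.val v.val with h | h
    · exact itv_reach (v.val - u.val) u v hu' hv' (by omega)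
    · exact (itv_reach (u.val - v.val) v u hv' hu' (by omega)).symm
  · exact ⟨⟨⟨x, by omega⟩, mem_itv.2 ⟨le_rfl, hxy⟩⟩⟩

lemma itv_bundleConn {m x y : ℕ} (hy : y ≤ m) :
    BundleConn (pathGraph m) (itv m x y) := by
  by_cases hxy : x < y
  · exact Or.inr (itv_conn hxy hy)
  · left
    ext v
    rw [mem_itv]
    simp
    omega

lemma itv_card {m x y : ℕ} (hxy : x ≤ y) (hy : y ≤ m) : (itv m x y).card = y - x := by
  have himg : (itv m x y).image Fin.val = Finset.Ico x y := by
    ext n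
    simp only [Finset.mem_image, Finset.mem_Ico]
    constructor
    · rintro ⟨v, hv, rfl⟩
      exact (mem_itv.1 hv)
    · rintro ⟨h1, h2⟩
      exact ⟨⟨n, by omega⟩, mem_itv.2 ⟨h1, h2⟩, rfl⟩
  have := Finset.card_image_of_injective (itv m x y) (Fin.val_injective)
  rw [himg, Nat.card_Ico] at this
  omega

lemma pair_multiset_eq {a b x y : ℝ} (h : ({a, b} : Multiset ℝ) = {x, y}) :
    (a = x ∧ b = y) ∨ (a = y ∧ b = x) := by
  rw [Multiset.insert_eq_cons, Multiset.insert_eq_cons, Multiset.cons_eq_cons] at h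
  rcases h with ⟨rfl, h⟩ | ⟨hne, cs, h1, h2⟩
  · left
    exact ⟨rfl, by simpa using h⟩
  · right
    have hcs : cs = 0 := by
      have h3 := congrArg Multiset.card h1
      rw [Multiset.card_singleton, Multiset.card_cons] at h3
      exact Multiset.card_eq_zero.1 (by omega)
    subst hcs
    simp at h1 h2
    exact ⟨h2.symm, h1⟩

lemma sorted_two {l : List ℝ} (hs : List.Pairwise (· ≤ ·) l) {x y : ℝ}
    (hl : (l : Multiset ℝ) = {x, y}) :
    ∃ a b, l = [a, b] ∧ a ≤ b ∧ ((a = x ∧ b = y) ∨ (a = y ∧ b = x)) := by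
  have hlen : l.length = 2 := by
    have := congrArg Multiset.card hl
    simpa using this
  obtain _ | ⟨a, _ | ⟨b, _ | ⟨c, t⟩⟩⟩ := l
  · simp at hlen
  · simp at hlen
  · refine ⟨a, b, rfl, ?_, ?_⟩
    · exact (List.pairwise_cons.1 hs).1 b (by simp)
    · apply pair_multiset_eq
      rw [← hl]
      rfl
  · simp at hlen

lemma sortedUtils_eq {m : ℕ} (u : Fin 2 → Finset (Fin m) → ℝ) (A : Fin 2 → Finset (Fin m)) :
    ∃ a b : ℝ, GraphFair.sortedUtils u A = [a, b] ∧ a ≤ b ∧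
      ((a = u 0 (A 0) ∧ b = u 1 (A 1)) ∨ (a = u 1 (A 1) ∧ b = u 0 (A 0))) := by
  have hcoe : ((GraphFair.sortedUtils u A : List ℝ) : Multiset ℝ) = {u 0 (A 0), u 1 (A 1)} := by
    unfold GraphFair.sortedUtils
    rw [Multiset.sort_eq]
    rfl
  have hs : List.Pairwise (· ≤ ·) (GraphFair.sortedUtils u A) := Multiset.pairwise_sort _ _
  obtain ⟨a, b, hab, hle, hc⟩ := sorted_two hs hcoe
  exact ⟨a, b, hab, hle, hc⟩

end PF

open GraphFair in
/-- For every `α > 0`, there exists an instance consisting of a path graph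
and two agents with binary additive utilities such that no connected leximin allocation
is `α`-PMMS. -/
theorem exists_path_leximin_not_alpha_pmms :
    ∀ α : ℝ, 0 < α →
      ∃ (m : ℕ) (u : Fin 2 → Finset (Fin m) → ℝ),
        (∀ i, BinaryAdditiveUtil (u i)) ∧
        ∀ A : Fin 2 → Finset (Fin m),
          IsLeximin (SimpleGraph.pathGraph m) u A →
          ¬ IsAlphaPMMS (SimpleGraph.pathGraph m) u A α := by
  intro α hα
  classical
  set N : ℕ := ⌊2 / α⌋₊ + 2 with hNdef
  set m : ℕ := 2 * N with hmdef
  have hN2 : 2 ≤ N := by omega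
  have hm4 : 4 ≤ m := by omega
  set k : ℕ := m - 3 with hkdef
  have hk1 : 1 ≤ k := by omega
  have hkm : k + 3 = m := by omega
  set z0 : Fin m := ⟨0, by omega⟩ with hz0
  set zk : Fin m := ⟨k, by omega⟩ with hzk
  have hz0k : z0 ≠ zk := by
    intro h
    have := congrArg Fin.val h
    simp [hz0, hzk, Fin.val_mk] at this
    omega
  set S : Fin 2 → Finset (Fin m) := ![{z0, zk}, Finset.univ] with hS
  set u : Fin 2 → Finset (Fin m) → ℝ := fun i X => ((X ∩ S i).card : ℝ) with hu
  have hsingle : ∀ (i : Fin 2) (v : Fin m),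
      u i {v} = if v ∈ S i then (1 : ℝ) else 0 := by
    intro i v
    by_cases h : v ∈ S i
    · simp [hu, Finset.singleton_inter_of_mem h, h]
    · simp [hu, Finset.singleton_inter_of_notMem h, h]
  refine ⟨m, u, ?_, ?_⟩
  · intro i
    constructor
    · intro X
      simp only [hsingle]
      rw [Finset.sum_ite_mem]
      simp [hu]
    · intro v
      rw [hsingle]
      by_cases h : v ∈ S i <;> simp [h]
  · intro A hlex hpm
    obtain ⟨⟨hcov, hdisj, hbc⟩, hopt⟩ := hlex
    -- the benchmark allocation B
    set B : Fin 2 → Finset (Fin m) := ![itv m 0 (k + 1), itv m (k + 1) m] with hB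
    have hBconn : IsConnAlloc (SimpleGraph.pathGraph m) B := by
      refine ⟨?_, ?_, ?_⟩
      · intro v
        by_cases h : v.val ≤ k
        · exact ⟨0, by simp [hB, PF.mem_itv, Fin.val_mk]; omega⟩
        · exact ⟨1, by simp [hB, PF.mem_itv, Fin.val_mk]; omega⟩
      · intro i j hij
        fin_cases i <;> fin_cases j <;> simp at hij ⊢ <;>
          · rw [Finset.disjoint_left]
            intro v hv hv'
            rw [hB] at hv hv'
            simp [PF.mem_itv] at hv hv'
            omega
      · intro i
        fin_cases i
        · simpa [hB] using PF.itv_bundleConn (m := m) (x := 0) (y := k + 1) (by omega)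
        · simpa [hB] using PF.itv_bundleConn (m := m) (x := k + 1) (y := m) le_rfl
    have hB0 : u 0 (B 0) = 2 := by
      have hsub : S 0 ⊆ B 0 := by
        intro v hv
        rw [hS] at hv
        simp at hv
        rcases hv with rfl | rfl <;> simp [hB, PF.mem_itv, hz0, hzk, Fin.val_mk] <;> omega
      have heq : B 0 ∩ S 0 = S 0 := Finset.inter_eq_right.2 hsub
      simp only [hu, heq]
      rw [hS]
      simp [Finset.card_pair hz0k]
    have hB1 : u 1 (B 1) = 2 := by
      simp only [hu, hS]
      simp only [Matrix.cons_val_one, Matrix.head_cons, Matrix.cons_val_zero, Finset.inter_univ, hB]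
      rw [PF.itv_card (by omega) le_rfl]
      have h2 : m - (k + 1) = 2 := by omega
      rw [h2]
      norm_num
    -- sorted utilities of B are [2,2]
    have hsortB : sortedUtils u B = [2, 2] := by
      obtain ⟨a, b, hab, hle, hc⟩ := PF.sortedUtils_eq u B
      rw [hab]
      rcases hc with ⟨h1, h2⟩ | ⟨h1, h2⟩ <;> rw [h1, h2, hB0, hB1]
    have hnolex : ¬ List.Lex (· < ·) (sortedUtils u A) [2, 2] := by
      intro h
      have himp : LeximinImproves u B A := by
        unfold LeximinImproves
        rw [hsortB]
        exact h
      exact hopt B hBconn himp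
    -- sorted utilities of A
    obtain ⟨a, b, hab, hle, hc⟩ := PF.sortedUtils_eq u A
    have ha2 : (2 : ℝ) ≤ a := by
      by_contra h
      push_neg at h
      exact hnolex (by rw [hab]; exact List.Lex.rel h)
    have hx2 : (2 : ℝ) ≤ u 0 (A 0) ∧ (2 : ℝ) ≤ u 1 (A 1) := by
      rcases hc with ⟨h1, h2⟩ | ⟨h1, h2⟩
      · exact ⟨h1 ▸ ha2, h2 ▸ le_trans ha2 hle⟩
      · exact ⟨h2 ▸ le_trans ha2 hle, h1 ▸ ha2⟩
    -- agent 0 owns both special vertices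
    have hcard0 : 2 ≤ (A 0 ∩ S 0).card := by
      have h := hx2.1
      simp only [hu] at h
      exact_mod_cast h
    have hSsub : S 0 ⊆ A 0 := by
      have hcS : (S 0).card = 2 := by rw [hS]; simp [Finset.card_pair hz0k]
      have heq : A 0 ∩ S 0 = S 0 :=
        Finset.eq_of_subset_of_card_le Finset.inter_subset_right (by omega)
      intro v hv
      have hv' : v ∈ A 0 ∩ S 0 := by rw [heq]; exact hv
      exact (Finset.mem_inter.1 hv').1
    have hz0A : z0 ∈ A 0 := hSsub (by rw [hS]; simp)
    have hzkA : zk ∈ A 0 := hSsub (by rw [hS]; simp)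
    have hA0conn : ((SimpleGraph.pathGraph m).induce ((A 0 : Finset (Fin m)) : Set (Fin m))).Connected := by
      rcases hbc 0 with h | h
      · rw [h] at hz0A; simp at hz0A
      · exact h
    have hA0all : ∀ (j : ℕ) (hj : j < m), j ≤ k → (⟨j, hj⟩ : Fin m) ∈ A 0 := by
      intro j hj hjk
      exact PF.interval_mem hA0conn hz0A hzkA hj (by simp [hz0, Fin.val_mk]) (by simp [hzk, Fin.val_mk]; omega)
    -- agent 1's bundle is inside {k+1, k+2}
    have hkm1 : k + 1 < m := by omega
    have hkm2 : k + 2 < m := by omega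
    have hA1sub : A 1 ⊆ {(⟨k + 1, hkm1⟩ : Fin m), (⟨k + 2, hkm2⟩ : Fin m)} := by
      intro v hv
      have hvk : k + 1 ≤ v.val := by
        by_contra h
        push_neg at h
        have hv0 : v ∈ A 0 := by
          have := hA0all v.val v.isLt (by omega)
          simpa using this
        exact (Finset.disjoint_left.1 (hdisj 0 1 (by decide)) hv0) hv
      have hvm : v.val < m := v.isLt
      simp only [Finset.mem_insert, Finset.mem_singleton]
      rcases Nat.lt_or_ge v.val (k + 2) with h | h
      · left; exact Fin.ext (by simp [Fin.val_mk]; omega)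
      · right; exact Fin.ext (by simp [Fin.val_mk]; omega)
    have hcard1 : (A 1).card ≤ 2 := by
      calc (A 1).card ≤ ({(⟨k + 1, hkm1⟩ : Fin m), (⟨k + 2, hkm2⟩ : Fin m)} : Finset (Fin m)).card := Finset.card_le_card hA1sub
        _ ≤ 2 := Finset.card_insert_le _ _ |>.trans (by simp)
    have hu1A : u 1 (A 1) = ((A 1).card : ℝ) := by
      simp only [hu, hS]
      simp
    have hu1le : u 1 (A 1) ≤ 2 := by
      rw [hu1A]
      exact_mod_cast hcard1
    -- w1 ∈ A 1 since |A 1| ≥ 2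
    have hw1A : (⟨k + 1, hkm1⟩ : Fin m) ∈ A 1 := by
      have h2c : 2 ≤ (A 1).card := by
        have := hx2.2
        rw [hu1A] at this
        exact_mod_cast this
      have hcp : ({(⟨k + 1, hkm1⟩ : Fin m), (⟨k + 2, hkm2⟩ : Fin m)} : Finset (Fin m)).card = 2 := by
        rw [Finset.card_pair]
        intro h
        have := congrArg Fin.val h
        simp [Fin.val_mk] at this
      have := Finset.eq_of_subset_of_card_le hA1sub (by omega)
      rw [this]
      simp
    have hadj : AdjUnder (SimpleGraph.pathGraph m) A 1 0 := by
      refine ⟨⟨k + 1, hkm1⟩, hw1A, zk, hzkA, ?_⟩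
      rw [SimpleGraph.pathGraph_adj]
      right
      simp [hzk, Fin.val_mk]
    have hkey := hpm 1 0 (by decide) (Or.inr hadj)
    -- A 1 ∪ A 0 = univ
    have hunion : A 1 ∪ A 0 = Finset.univ := by
      ext v
      simp only [Finset.mem_union, Finset.mem_univ, iff_true]
      obtain ⟨i, hi⟩ := hcov v
      fin_cases i
      · exact Or.inr hi
      · exact Or.inl hi
    rw [hunion] at hkey
    -- pmms of agent 1 on the whole path is at least N
    have hNle : (N : ℝ) ≤ pmms (SimpleGraph.pathGraph m) (u 1) Finset.univ := by
      apply le_csSup ((Set.toFinite _).bddAbove)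
      refine ⟨(itv m 0 N, itv m N m), ?_, ?_⟩
      · refine ⟨?_, ?_, ?_, ?_⟩
        · ext v
          simp [PF.mem_itv]
          omega
        · rw [Finset.disjoint_left]
          intro v hv hv'
          rw [PF.mem_itv] at hv hv'
          omega
        · exact PF.itv_bundleConn (by omega)
        · exact PF.itv_bundleConn le_rfl
      · have h1 : u 1 (itv m 0 N) = (N : ℝ) := by
          simp only [hu, hS]
          simp only [Matrix.cons_val_one, Matrix.head_cons, Matrix.cons_val_zero, Finset.inter_univ]
          rw [PF.itv_card (by omega) (by omega)]
          norm_num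
        have h2 : u 1 (itv m N m) = (N : ℝ) := by
          simp only [hu, hS]
          simp only [Matrix.cons_val_one, Matrix.head_cons, Matrix.cons_val_zero, Finset.inter_univ]
          rw [PF.itv_card (by omega) le_rfl]
          have hmn : m - N = N := by omega
          rw [hmn]
        simp [h1, h2]
    have hfloor : 2 / α < (N : ℝ) := by
      have h1 : 2 / α < (⌊2 / α⌋₊ : ℝ) + 1 := Nat.lt_floor_add_one _
      have h2 : ((⌊2 / α⌋₊ : ℕ) : ℝ) + 1 ≤ (N : ℝ) := by
        rw [hNdef]
        push_cast
        linarith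
      linarith
    have h2lt : (2 : ℝ) < α * N := by
      rw [div_lt_iff₀ hα] at hfloor
      linarith [hfloor]
    have hchain : α * (N : ℝ) ≤ α * pmms (SimpleGraph.pathGraph m) (u 1) Finset.univ :=
      mul_le_mul_of_nonneg_left hNle (le_of_lt hα)
    linarith [hkey, hu1le]
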